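/- arXiv:2010.01259 — 2 statements merged into one kernel-verified Lean document; each statement's English description precedes it below -/
import Mathlib

section
/- Let E be a real normed vector space and let f, g : E → ℝ be convex continuous functions admitting a common continuous affine minorant (there exist φ₀ ∈ E* and c ∈ ℝ with φ₀(u) − c ≤ f(u) and φ₀(u) − c ≤ g(u) for all u ∈ E). Then for every x ∈ E, (f ! g)(x) ≤ L(f,g)(x) ≤ (f ∇ g)(x), where f ! g = f !_{1/2} g, (f ∇ g)(x) = (f(x)+g(x))/2, and L(f,g)(x) = ∫₀¹ (f ♯_t g)(x) dt is the logarithmic mean of f and g. -/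
open Real

/-- The `t`-weighted functional harmonic mean of `f,g : E → ℝ`, evaluated at `x`. -/
noncomputable def funHarm {E : Type*} [NormedAddCommGroup E] [NormedSpace ℝ E]
    (f g : E → ℝ) (t : ℝ) (x : E) : ℝ :=
  sSup { r : ℝ | ∃ φ : E →L[ℝ] ℝ, ∃ c₁ c₂ : ℝ,
    (∀ u : E, φ u - f u ≤ c₁) ∧ (∀ u : E, φ u - g u ≤ c₂) ∧
    r = φ x - (1 - t) * c₁ - t * c₂ }


open MeasureTheory intervalIntegral Set

set_option linter.unusedVariables false


lemma ofReal_betaIntegrand {p q : ℝ} (t : ℝ) (ht : 0 ≤ t) (ht1 : t ≤ 1) :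
    ((t ^ (p-1) * (1-t) ^ (q-1) : ℝ) : ℂ) =
      (t : ℂ) ^ ((p:ℂ) - 1) * (1 - (t:ℂ)) ^ ((q:ℂ) - 1) := by
  push_cast
  rw [Complex.ofReal_cpow ht, Complex.ofReal_cpow (by linarith)]
  push_cast
  ring_nf

lemma realBeta_integrable {p q : ℝ} (hp : 0 < p) (hq : 0 < q) :
    IntervalIntegrable (fun t : ℝ => t ^ (p-1) * (1-t) ^ (q-1)) volume 0 1 := by
  have h := Complex.betaIntegral_convergent (u := p) (v := q) (by simpa) (by simpa)
  have h2 : IntervalIntegrable (fun t : ℝ =>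
      ((t ^ (p-1) * (1-t) ^ (q-1) : ℝ) : ℂ)) volume 0 1 := by
    apply h.congr
    intro t ht
    rw [Set.uIoc_of_le (by norm_num : (0:ℝ) ≤ 1)] at ht
    exact (ofReal_betaIntegrand t ht.1.le ht.2).symm
  rw [intervalIntegrable_iff] at h2 ⊢
  simpa [IntegrableOn] using h2.re

lemma realBeta_value {p q : ℝ} (hp : 0 < p) (hq : 0 < q) :
    ∫ t in (0:ℝ)..1, t ^ (p-1) * (1-t) ^ (q-1)
      = Real.Gamma p * Real.Gamma q / Real.Gamma (p+q) := by
  have h := Complex.Gamma_mul_Gamma_eq_betaIntegral (s := p) (t := q) (by simpa) (by simpa)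
  have h2 : Complex.betaIntegral p q =
      ((∫ t in (0:ℝ)..1, t ^ (p-1) * (1-t) ^ (q-1) : ℝ) : ℂ) := by
    rw [Complex.betaIntegral, ← intervalIntegral.integral_ofReal]
    apply intervalIntegral.integral_congr
    intro t ht
    rw [Set.uIcc_of_le (by norm_num : (0:ℝ) ≤ 1)] at ht
    exact (ofReal_betaIntegrand t ht.1 ht.2).symm
  rw [h2] at h
  have hne : Real.Gamma (p+q) ≠ 0 := (Real.Gamma_pos_of_pos (by linarith)).ne'
  rw [show ((p:ℂ) + q) = ((p+q : ℝ) : ℂ) by push_cast; ring] at h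
  simp only [Complex.Gamma_ofReal] at h
  have hr : Real.Gamma p * Real.Gamma q
      = Real.Gamma (p+q) * ∫ t in (0:ℝ)..1, t ^ (p-1) * (1-t) ^ (q-1) := by
    exact_mod_cast h
  rw [eq_div_iff hne, hr]; ring


section Harm
variable {E : Type*} [NormedAddCommGroup E] [NormedSpace ℝ E]
  {f g : E → ℝ} {x : E}

lemma harmSet_nonempty (φ₀ : E →L[ℝ] ℝ) (c : ℝ)
    (hm : ∀ u : E, φ₀ u - c ≤ f u ∧ φ₀ u - c ≤ g u) (t : ℝ) :
    Set.Nonempty { r : ℝ | ∃ φ : E →L[ℝ] ℝ, ∃ c₁ c₂ : ℝ,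
      (∀ u : E, φ u - f u ≤ c₁) ∧ (∀ u : E, φ u - g u ≤ c₂) ∧
      r = φ x - (1 - t) * c₁ - t * c₂ } :=
  ⟨_, φ₀, c, c, fun u => by linarith [(hm u).1], fun u => by linarith [(hm u).2], rfl⟩

lemma harmSet_bddAbove {t : ℝ} (ht : t ∈ Set.Icc (0:ℝ) 1) :
    BddAbove { r : ℝ | ∃ φ : E →L[ℝ] ℝ, ∃ c₁ c₂ : ℝ,
      (∀ u : E, φ u - f u ≤ c₁) ∧ (∀ u : E, φ u - g u ≤ c₂) ∧
      r = φ x - (1 - t) * c₁ - t * c₂ } := by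
  refine ⟨(1-t) * f x + t * g x, ?_⟩
  rintro r ⟨φ, c₁, c₂, h1, h2, rfl⟩
  have a1 := h1 x
  have a2 := h2 x
  nlinarith [ht.1, ht.2, mul_nonneg (by linarith [ht.2] : (0:ℝ) ≤ 1 - t)
      (by linarith : (0:ℝ) ≤ c₁ - (φ x - f x)),
    mul_nonneg ht.1 (by linarith : (0:ℝ) ≤ c₂ - (φ x - g x))]

lemma funHarm_le_arith (φ₀ : E →L[ℝ] ℝ) (c : ℝ)
    (hm : ∀ u : E, φ₀ u - c ≤ f u ∧ φ₀ u - c ≤ g u)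
    {t : ℝ} (ht : t ∈ Set.Icc (0:ℝ) 1) :
    funHarm f g t x ≤ (1-t) * f x + t * g x := by
  apply csSup_le (harmSet_nonempty φ₀ c hm t)
  rintro r ⟨φ, c₁, c₂, h1, h2, rfl⟩
  have a1 := h1 x
  have a2 := h2 x
  nlinarith [ht.1, ht.2, mul_nonneg (by linarith [ht.2] : (0:ℝ) ≤ 1 - t)
      (by linarith : (0:ℝ) ≤ c₁ - (φ x - f x)),
    mul_nonneg ht.1 (by linarith : (0:ℝ) ≤ c₂ - (φ x - g x))]

lemma le_funHarm {φ : E →L[ℝ] ℝ} {c₁ c₂ : ℝ}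
    (h1 : ∀ u : E, φ u - f u ≤ c₁) (h2 : ∀ u : E, φ u - g u ≤ c₂)
    {t : ℝ} (ht : t ∈ Set.Icc (0:ℝ) 1) :
    φ x - (1-t) * c₁ - t * c₂ ≤ funHarm f g t x :=
  le_csSup (harmSet_bddAbove ht) ⟨φ, c₁, c₂, h1, h2, rfl⟩

lemma convexOn_funHarm (φ₀ : E →L[ℝ] ℝ) (c : ℝ)
    (hm : ∀ u : E, φ₀ u - c ≤ f u ∧ φ₀ u - c ≤ g u) :
    ConvexOn ℝ (Set.Icc (0:ℝ) 1) (fun t => funHarm f g t x) := by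
  refine ⟨convex_Icc _ _, ?_⟩
  intro t₁ ht₁ t₂ ht₂ a b ha hb hab
  apply csSup_le (harmSet_nonempty φ₀ c hm _)
  rintro r ⟨φ, c₁, c₂, h1, h2, rfl⟩
  have e1 := le_funHarm (x := x) h1 h2 ht₁
  have e2 := le_funHarm (x := x) h1 h2 ht₂
  have key : φ x - (1 - (a • t₁ + b • t₂)) * c₁ - (a • t₁ + b • t₂) * c₂
      = a * (φ x - (1-t₁) * c₁ - t₁ * c₂) + b * (φ x - (1-t₂) * c₁ - t₂ * c₂) := by
    simp only [smul_eq_mul]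
    linear_combination (c₁ - φ x) * hab
  rw [key]
  exact add_le_add (mul_le_mul_of_nonneg_left e1 ha) (mul_le_mul_of_nonneg_left e2 hb)

lemma abs_funHarm_le (φ₀ : E →L[ℝ] ℝ) (c : ℝ)
    (hm : ∀ u : E, φ₀ u - c ≤ f u ∧ φ₀ u - c ≤ g u)
    {t : ℝ} (ht : t ∈ Set.Icc (0:ℝ) 1) :
    |funHarm f g t x| ≤ max (max |f x| |g x|) |φ₀ x - c| := by
  have hup : funHarm f g t x ≤ (1-t) * f x + t * g x := funHarm_le_arith φ₀ c hm ht
  have hlo : φ₀ x - c ≤ funHarm f g t x := by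
    have := le_funHarm (f := f) (g := g) (x := x) (φ := φ₀) (c₁ := c) (c₂ := c)
      (fun u => by linarith [(hm u).1]) (fun u => by linarith [(hm u).2]) ht
    linarith [this]
  rw [abs_le]
  constructor
  · have : -(max (max |f x| |g x|) |φ₀ x - c|) ≤ -|φ₀ x - c| := by
      simp [le_max_right]
    calc -(max (max |f x| |g x|) |φ₀ x - c|) ≤ -|φ₀ x - c| := this
      _ ≤ φ₀ x - c := neg_abs_le _
      _ ≤ _ := hlo
  · have h1 : f x ≤ max (max |f x| |g x|) |φ₀ x - c| :=
      le_trans (le_abs_self _) (le_trans (le_max_left _ _) (le_max_left _ _))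
    have h2 : g x ≤ max (max |f x| |g x|) |φ₀ x - c| :=
      le_trans (le_abs_self _) (le_trans (le_max_right _ _) (le_max_left _ _))
    nlinarith [ht.1, ht.2, mul_le_mul_of_nonneg_left h1 (by linarith [ht.2] : (0:ℝ) ≤ 1-t),
      mul_le_mul_of_nonneg_left h2 ht.1]

lemma continuousOn_funHarm (φ₀ : E →L[ℝ] ℝ) (c : ℝ)
    (hm : ∀ u : E, φ₀ u - c ≤ f u ∧ φ₀ u - c ≤ g u) :
    ContinuousOn (fun t => funHarm f g t x) (Set.Ioo (0:ℝ) 1) :=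
  ((convexOn_funHarm (x := x) φ₀ c hm).subset Set.Ioo_subset_Icc_self
    (convex_Ioo _ _)).continuousOn isOpen_Ioo

end Harm



section Geom
variable {E : Type*} [NormedAddCommGroup E] [NormedSpace ℝ E]
  {f g : E → ℝ} {x : E} {l : ℝ}

lemma W_intervalIntegrable (hl : l ∈ Set.Ioo (0:ℝ) 1) :
    IntervalIntegrable (fun t : ℝ => t ^ (l-1) * (1-t) ^ (-l)) volume 0 1 := by
  have := realBeta_integrable hl.1 (by linarith [hl.2] : (0:ℝ) < 1 - l)
  simpa [show (1-l)-1 = -l by ring] using this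

lemma tW_intervalIntegrable (hl : l ∈ Set.Ioo (0:ℝ) 1) :
    IntervalIntegrable (fun t : ℝ => t ^ (l-1) * (1-t) ^ (-l) * t) volume 0 1 := by
  have h := realBeta_integrable (by linarith [hl.1] : (0:ℝ) < l + 1)
    (by linarith [hl.2] : (0:ℝ) < 1 - l)
  apply h.congr
  intro t ht
  beta_reduce
  rw [Set.uIoc_of_le (by norm_num : (0:ℝ) ≤ 1)] at ht
  rw [show (l+1)-1 = (l-1)+1 by ring, Real.rpow_add_one ht.1.ne',
    show (1-l)-1 = -l by ring]
  ring

lemma tW_integral (hl : l ∈ Set.Ioo (0:ℝ) 1) :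
    ∫ t in (0:ℝ)..1, t ^ (l-1) * (1-t) ^ (-l) * t
      = l * (Real.Gamma l * Real.Gamma (1-l)) := by
  have h : ∫ t in (0:ℝ)..1, t ^ (l-1) * (1-t) ^ (-l) * t
      = ∫ t in (0:ℝ)..1, t ^ ((l+1)-1) * (1-t) ^ ((1-l)-1) := by
    apply intervalIntegral.integral_congr
    intro t ht
    beta_reduce
    rw [Set.uIcc_of_le (by norm_num : (0:ℝ) ≤ 1)] at ht
    rcases eq_or_lt_of_le ht.1 with h0 | h0
    · rw [← h0]
      rw [Real.zero_rpow (by intro h; rw [sub_eq_zero] at h; nlinarith [hl.1] : (l+1)-1 ≠ 0),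
        Real.zero_rpow (by intro h; rw [sub_eq_zero] at h; nlinarith [hl.2] : l-1 ≠ 0)]
      ring
    · rw [show (l+1)-1 = (l-1)+1 by ring, Real.rpow_add_one h0.ne',
        show (1-l)-1 = -l by ring]
      ring
  rw [h, realBeta_value (by linarith [hl.1]) (by linarith [hl.2]),
    show (l+1)+(1-l) = 2 by ring, Real.Gamma_two,
    show (l:ℝ)+1 = l+1 by ring, Real.Gamma_add_one hl.1.ne']
  ring

lemma W_integral (hl : l ∈ Set.Ioo (0:ℝ) 1) :
    ∫ t in (0:ℝ)..1, t ^ (l-1) * (1-t) ^ (-l)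
      = Real.Gamma l * Real.Gamma (1-l) := by
  have h : ∫ t in (0:ℝ)..1, t ^ (l-1) * (1-t) ^ (-l)
      = ∫ t in (0:ℝ)..1, t ^ (l-1) * (1-t) ^ ((1-l)-1) := by
    apply intervalIntegral.integral_congr
    intro t _
    rw [show (1-l)-1 = -l by ring]
  rw [h, realBeta_value hl.1 (by linarith [hl.2]),
    show l+(1-l) = 1 by ring, Real.Gamma_one, div_one]

lemma sin_pi_l_pos (hl : l ∈ Set.Ioo (0:ℝ) 1) : 0 < Real.sin (π * l) :=
  Real.sin_pos_of_pos_of_lt_pi (mul_pos Real.pi_pos hl.1)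
    (by nlinarith [Real.pi_pos, hl.2])

lemma Waffine_intervalIntegrable (hl : l ∈ Set.Ioo (0:ℝ) 1) (a b : ℝ) :
    IntervalIntegrable (fun t : ℝ => t ^ (l-1) * (1-t) ^ (-l) * (a + b*t)) volume 0 1 := by
  have : (fun t : ℝ => t ^ (l-1) * (1-t) ^ (-l) * (a + b*t))
      = fun t : ℝ => a * (t ^ (l-1) * (1-t) ^ (-l)) + b * (t ^ (l-1) * (1-t) ^ (-l) * t) := by
    funext t; ring
  rw [this]
  exact ((W_intervalIntegrable hl).const_mul a).add ((tW_intervalIntegrable hl).const_mul b)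

lemma Waffine_integral (hl : l ∈ Set.Ioo (0:ℝ) 1) (a b : ℝ) :
    (Real.sin (π * l) / π) * ∫ t in (0:ℝ)..1, t ^ (l-1) * (1-t) ^ (-l) * (a + b*t)
      = a + b * l := by
  have e : (fun t : ℝ => t ^ (l-1) * (1-t) ^ (-l) * (a + b*t))
      = fun t : ℝ => a * (t ^ (l-1) * (1-t) ^ (-l)) + b * (t ^ (l-1) * (1-t) ^ (-l) * t) := by
    funext t; ring
  rw [e, intervalIntegral.integral_add ((W_intervalIntegrable hl).const_mul a)
      ((tW_intervalIntegrable hl).const_mul b),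
    intervalIntegral.integral_const_mul, intervalIntegral.integral_const_mul,
    W_integral hl, tW_integral hl]
  have hrefl : Real.Gamma l * Real.Gamma (1-l) = π / Real.sin (π * l) :=
    Real.Gamma_mul_Gamma_one_sub l
  rw [hrefl]
  have hs := sin_pi_l_pos hl
  field_simp

lemma aesm_WH (φ₀ : E →L[ℝ] ℝ) (c : ℝ)
    (hm : ∀ u : E, φ₀ u - c ≤ f u ∧ φ₀ u - c ≤ g u) (l : ℝ) :
    AEStronglyMeasurable (fun t : ℝ => t ^ (l-1) * (1-t) ^ (-l) * funHarm f g t x)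
      (volume.restrict (Set.Ioc (0:ℝ) 1)) := by
  rw [show volume.restrict (Set.Ioc (0:ℝ) 1) = volume.restrict (Set.Ioo (0:ℝ) 1) from
    (Measure.restrict_congr_set Ioo_ae_eq_Ioc).symm]
  have hW : Measurable (fun t : ℝ => t ^ (l-1) * (1-t) ^ (-l)) := by fun_prop
  exact hW.aestronglyMeasurable.mul
    (((continuousOn_funHarm (x := x) φ₀ c hm).aestronglyMeasurable measurableSet_Ioo))

lemma WH_intervalIntegrable (φ₀ : E →L[ℝ] ℝ) (c : ℝ)
    (hm : ∀ u : E, φ₀ u - c ≤ f u ∧ φ₀ u - c ≤ g u) (hl : l ∈ Set.Ioo (0:ℝ) 1) :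
    IntervalIntegrable (fun t : ℝ => t ^ (l-1) * (1-t) ^ (-l) * funHarm f g t x)
      volume 0 1 := by
  set M := max (max |f x| |g x|) |φ₀ x - c| with hM
  rw [intervalIntegrable_iff, Set.uIoc_of_le (by norm_num : (0:ℝ) ≤ 1)]
  apply Integrable.mono' (g := fun t : ℝ => t ^ (l-1) * (1-t) ^ (-l) * M)
  · have := (W_intervalIntegrable hl).mul_const M
    rw [intervalIntegrable_iff, Set.uIoc_of_le (by norm_num : (0:ℝ) ≤ 1)] at this
    exact this
  · exact aesm_WH φ₀ c hm l
  · filter_upwards [ae_restrict_mem measurableSet_Ioc] with t ht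
    have ht' : t ∈ Set.Icc (0:ℝ) 1 := ⟨ht.1.le, ht.2⟩
    have hWnn : 0 ≤ t ^ (l-1) * (1-t) ^ (-l) :=
      mul_nonneg (Real.rpow_nonneg ht.1.le _) (Real.rpow_nonneg (by linarith [ht.2]) _)
    rw [Real.norm_eq_abs, abs_mul, abs_of_nonneg hWnn]
    exact mul_le_mul_of_nonneg_left (abs_funHarm_le φ₀ c hm ht') hWnn

end Geom


/-- The `λ`-weighted functional geometric mean of `f,g : E → ℝ`, evaluated at `x`. -/
noncomputable def funGeom {E : Type*} [NormedAddCommGroup E] [NormedSpace ℝ E]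
    (f g : E → ℝ) (l : ℝ) (x : E) : ℝ :=
  (Real.sin (π * l) / π) *
    ∫ t in (0 : ℝ)..1, t ^ (l - 1) * (1 - t) ^ (-l) * funHarm f g t x

/-- The logarithmic mean `L(f,g)(x) = ∫₀¹ (f ♯_t g)(x) dt`. -/
noncomputable def funLog {E : Type*} [NormedAddCommGroup E] [NormedSpace ℝ E]
    (f g : E → ℝ) (x : E) : ℝ :=
  ∫ t in (0 : ℝ)..1, funGeom f g t x

section Geom2
variable {E : Type*} [NormedAddCommGroup E] [NormedSpace ℝ E]
  {f g : E → ℝ} {x : E} {l : ℝ}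

lemma funGeom_le_affine (φ₀ : E →L[ℝ] ℝ) (c : ℝ)
    (hm : ∀ u : E, φ₀ u - c ≤ f u ∧ φ₀ u - c ≤ g u) (hl : l ∈ Set.Ioo (0:ℝ) 1) :
    funGeom f g l x ≤ (1-l) * f x + l * g x := by
  have hs := sin_pi_l_pos hl
  have hcoef : 0 ≤ Real.sin (π * l) / π := by positivity
  have hmono : (∫ t in (0:ℝ)..1, t ^ (l-1) * (1-t) ^ (-l) * funHarm f g t x)
      ≤ ∫ t in (0:ℝ)..1, t ^ (l-1) * (1-t) ^ (-l) * (f x + (g x - f x) * t) := by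
    apply intervalIntegral.integral_mono_on zero_le_one
      (WH_intervalIntegrable φ₀ c hm hl) (Waffine_intervalIntegrable hl _ _)
    intro t ht
    have h1 : funHarm f g t x ≤ (1-t) * f x + t * g x := funHarm_le_arith φ₀ c hm ht
    have hWnn : 0 ≤ t ^ (l-1) * (1-t) ^ (-l) :=
      mul_nonneg (Real.rpow_nonneg ht.1 _) (Real.rpow_nonneg (by linarith [ht.2]) _)
    exact mul_le_mul_of_nonneg_left (by linarith) hWnn
  calc funGeom f g l x
      ≤ (Real.sin (π * l) / π) *
        ∫ t in (0:ℝ)..1, t ^ (l-1) * (1-t) ^ (-l) * (f x + (g x - f x) * t) := by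
        rw [funGeom]; exact mul_le_mul_of_nonneg_left hmono hcoef
    _ = f x + (g x - f x) * l := Waffine_integral hl _ _
    _ = (1-l) * f x + l * g x := by ring

lemma affine_le_funGeom (φ₀ : E →L[ℝ] ℝ) (c : ℝ)
    (hm : ∀ u : E, φ₀ u - c ≤ f u ∧ φ₀ u - c ≤ g u)
    {φ : E →L[ℝ] ℝ} {c₁ c₂ : ℝ}
    (h1 : ∀ u : E, φ u - f u ≤ c₁) (h2 : ∀ u : E, φ u - g u ≤ c₂)
    (hl : l ∈ Set.Ioo (0:ℝ) 1) :
    φ x - (1-l) * c₁ - l * c₂ ≤ funGeom f g l x := by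
  have hs := sin_pi_l_pos hl
  have hcoef : 0 ≤ Real.sin (π * l) / π := by positivity
  have hmono : (∫ t in (0:ℝ)..1, t ^ (l-1) * (1-t) ^ (-l) * ((φ x - c₁) + (c₁ - c₂) * t))
      ≤ ∫ t in (0:ℝ)..1, t ^ (l-1) * (1-t) ^ (-l) * funHarm f g t x := by
    apply intervalIntegral.integral_mono_on zero_le_one
      (Waffine_intervalIntegrable hl _ _) (WH_intervalIntegrable φ₀ c hm hl)
    intro t ht
    have hle : φ x - (1-t) * c₁ - t * c₂ ≤ funHarm f g t x := le_funHarm h1 h2 ht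
    have hWnn : 0 ≤ t ^ (l-1) * (1-t) ^ (-l) :=
      mul_nonneg (Real.rpow_nonneg ht.1 _) (Real.rpow_nonneg (by linarith [ht.2]) _)
    exact mul_le_mul_of_nonneg_left (by linarith) hWnn
  calc φ x - (1-l) * c₁ - l * c₂
      = (φ x - c₁) + (c₁ - c₂) * l := by ring
    _ = (Real.sin (π * l) / π) *
        ∫ t in (0:ℝ)..1, t ^ (l-1) * (1-t) ^ (-l) * ((φ x - c₁) + (c₁ - c₂) * t) :=
        (Waffine_integral hl _ _).symm
    _ ≤ funGeom f g l x := by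
        rw [funGeom]; exact mul_le_mul_of_nonneg_left hmono hcoef

lemma abs_funGeom_le (φ₀ : E →L[ℝ] ℝ) (c : ℝ)
    (hm : ∀ u : E, φ₀ u - c ≤ f u ∧ φ₀ u - c ≤ g u) (hl : l ∈ Set.Ioo (0:ℝ) 1) :
    |funGeom f g l x| ≤ max (max |f x| |g x|) |φ₀ x - c| := by
  set M := max (max |f x| |g x|) |φ₀ x - c| with hM
  have h1 : f x ≤ M :=
    le_trans (le_abs_self _) (le_trans (le_max_left _ _) (le_max_left _ _))
  have h2 : g x ≤ M :=
    le_trans (le_abs_self _) (le_trans (le_max_right _ _) (le_max_left _ _))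
  have hup : funGeom f g l x ≤ M := by
    have := funGeom_le_affine (x := x) φ₀ c hm hl
    nlinarith [hl.1, hl.2, mul_le_mul_of_nonneg_left h1 (by linarith [hl.2] : (0:ℝ) ≤ 1-l),
      mul_le_mul_of_nonneg_left h2 hl.1.le]
  have hlo : -M ≤ funGeom f g l x := by
    have hle := affine_le_funGeom (x := x) φ₀ c hm (φ := φ₀) (c₁ := c) (c₂ := c)
      (fun u => by linarith [(hm u).1]) (fun u => by linarith [(hm u).2]) hl
    have e : (1-l) * c + l * c = c := by ring
    have h3 : -M ≤ φ₀ x - c := by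
      have : |φ₀ x - c| ≤ M := le_max_right _ _
      have := neg_abs_le (φ₀ x - c)
      linarith
    nlinarith [hle]
  rw [abs_le]; exact ⟨hlo, hup⟩

lemma continuousOn_funGeom (φ₀ : E →L[ℝ] ℝ) (c : ℝ)
    (hm : ∀ u : E, φ₀ u - c ≤ f u ∧ φ₀ u - c ≤ g u) :
    ContinuousOn (fun l => funGeom f g l x) (Set.Ioo (0:ℝ) 1) := by
  intro l₀ hl₀
  apply ContinuousAt.continuousWithinAt
  have hι : Set.uIoc (0:ℝ) 1 = Set.Ioc 0 1 := Set.uIoc_of_le zero_le_one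
  set M := max (max |f x| |g x|) |φ₀ x - c| with hMdef
  have hM0 : 0 ≤ M := le_trans (abs_nonneg _) (le_max_right _ _)
  set a := l₀/2 with hadef
  set b := (l₀+1)/2 with hbdef
  have ha : 0 < a := by rw [hadef]; linarith [hl₀.1]
  have hal : a < l₀ := by rw [hadef]; linarith [hl₀.1]
  have hlb : l₀ < b := by rw [hbdef]; linarith [hl₀.2]
  have hb1 : b < 1 := by rw [hbdef]; linarith [hl₀.2]
  have hInt : ContinuousAt
      (fun l => ∫ t in (0:ℝ)..1, t ^ (l-1) * (1-t) ^ (-l) * funHarm f g t x) l₀ := by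
    apply intervalIntegral.continuousAt_of_dominated_interval
      (bound := fun t => t ^ (a-1) * (1-t) ^ (-b) * M)
    · exact Filter.Eventually.of_forall (fun l => by rw [hι]; exact aesm_WH φ₀ c hm l)
    · apply Filter.eventually_of_mem (isOpen_Ioo.mem_nhds ⟨hal, hlb⟩)
      intro l hlab
      apply Filter.Eventually.of_forall
      intro t htι
      rw [hι] at htι
      have e1 : t ^ (l-1) ≤ t ^ (a-1) :=
        Real.rpow_le_rpow_of_exponent_ge htι.1 htι.2 (by linarith [hlab.1])
      have e2 : (1-t) ^ (-l) ≤ (1-t) ^ (-b) := by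
        rcases eq_or_lt_of_le htι.2 with h | h
        · rw [← h, sub_self,
            Real.zero_rpow (by intro hh; nlinarith [hlab.1, ha] : -l ≠ 0),
            Real.zero_rpow (by intro hh; nlinarith [ha, hal, hlb] : -b ≠ 0)]
        · exact Real.rpow_le_rpow_of_exponent_ge (by linarith [h] : (0:ℝ) < 1-t)
            (by linarith [htι.1] : (1:ℝ)-t ≤ 1) (by linarith [hlab.2])
      have e3 : |funHarm f g t x| ≤ M := abs_funHarm_le φ₀ c hm ⟨htι.1.le, htι.2⟩
      rw [Real.norm_eq_abs, abs_mul, abs_mul,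
        abs_of_nonneg (Real.rpow_nonneg htι.1.le _),
        abs_of_nonneg (Real.rpow_nonneg (by linarith [htι.2] : (0:ℝ) ≤ 1-t) _)]
      have hnn1 : (0:ℝ) ≤ t ^ (a-1) := Real.rpow_nonneg htι.1.le _
      have hnn2 : (0:ℝ) ≤ (1-t) ^ (-l) := Real.rpow_nonneg (by linarith [htι.2]) _
      have hnn3 : (0:ℝ) ≤ (1-t) ^ (-b) := Real.rpow_nonneg (by linarith [htι.2]) _
      exact mul_le_mul (mul_le_mul e1 e2 hnn2 hnn1) e3 (abs_nonneg _)
        (mul_nonneg hnn1 hnn3)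
    · have := (realBeta_integrable ha (by linarith : (0:ℝ) < 1-b)).mul_const M
      simpa [show (1-b)-1 = -b by ring] using this
    · have h1 : ∀ᵐ t : ℝ ∂(volume : MeasureTheory.Measure ℝ), t ≠ 1 := by
        refine MeasureTheory.ae_iff.2 ?_
        simp
      filter_upwards [h1] with t ht1 htι
      rw [hι] at htι
      have ht : t ∈ Set.Ioo (0:ℝ) 1 := ⟨htι.1, lt_of_le_of_ne htι.2 ht1⟩
      have c1 : ContinuousAt (fun l : ℝ => t ^ (l-1)) l₀ := by
        have h := Real.continuousAt_rpow (t, l₀-1) (Or.inl ht.1.ne')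
        exact ContinuousAt.comp (g := fun p : ℝ × ℝ => p.1 ^ p.2)
          (f := fun l : ℝ => (t, l-1)) h
          ((continuous_const.prodMk (continuous_id.sub continuous_const)).continuousAt)
      have c2 : ContinuousAt (fun l : ℝ => (1-t) ^ (-l)) l₀ := by
        have hne : (1-t) ≠ 0 := by nlinarith [ht.2]
        have h := Real.continuousAt_rpow (1-t, -l₀) (Or.inl hne)
        exact ContinuousAt.comp (g := fun p : ℝ × ℝ => p.1 ^ p.2)
          (f := fun l : ℝ => (1-t, -l)) h
          ((continuous_const.prodMk continuous_neg).continuousAt)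
      exact (c1.mul c2).mul continuousAt_const
  have hcoef : ContinuousAt (fun l : ℝ => Real.sin (π * l) / π) l₀ :=
    ((Real.continuous_sin.comp (continuous_const.mul continuous_id)).div_const π).continuousAt
  have := hcoef.mul hInt
  exact this

lemma integrableOn_funGeom (φ₀ : E →L[ℝ] ℝ) (c : ℝ)
    (hm : ∀ u : E, φ₀ u - c ≤ f u ∧ φ₀ u - c ≤ g u) :
    MeasureTheory.IntegrableOn (fun l => funGeom f g l x) (Set.Ioo (0:ℝ) 1) volume := by
  set M := max (max |f x| |g x|) |φ₀ x - c| with hM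
  apply Integrable.mono' (g := fun _ : ℝ => M)
  · exact integrableOn_const measure_Ioo_lt_top.ne
  · exact (continuousOn_funGeom φ₀ c hm).aestronglyMeasurable measurableSet_Ioo
  · filter_upwards [ae_restrict_mem measurableSet_Ioo] with l hl
    rw [Real.norm_eq_abs]
    exact abs_funGeom_le φ₀ c hm hl

lemma affine_Ioo_integral (a b : ℝ) :
    ∫ l in Set.Ioo (0:ℝ) 1, (a + b * l) = a + b / 2 := by
  rw [MeasureTheory.setIntegral_congr_set Ioo_ae_eq_Ioc,
    ← intervalIntegral.integral_of_le zero_le_one]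
  rw [intervalIntegral.integral_add intervalIntegrable_const
    (intervalIntegral.intervalIntegrable_id.const_mul b),
    intervalIntegral.integral_const, intervalIntegral.integral_const_mul,
    integral_id]
  norm_num
  ring

end Geom2

/-- The harmonic–logarithmic–arithmetic mean inequalities for convex
functionals: `(f ! g)(x) ≤ L(f,g)(x) ≤ (f ∇ g)(x)`. -/
theorem funHarm_le_funLog_le_arith
    {E : Type*} [NormedAddCommGroup E] [NormedSpace ℝ E]
    (f g : E → ℝ)
    (hf : ConvexOn ℝ Set.univ f) (hfc : Continuous f)
    (hg : ConvexOn ℝ Set.univ g) (hgc : Continuous g)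
    (hmin : ∃ φ₀ : E →L[ℝ] ℝ, ∃ c : ℝ, ∀ u : E, φ₀ u - c ≤ f u ∧ φ₀ u - c ≤ g u) :
    ∀ x : E, funHarm f g (1 / 2) x ≤ funLog f g x ∧ funLog f g x ≤ (f x + g x) / 2 := by
  intro x
  obtain ⟨φ₀, c, hm⟩ := hmin
  have hLog : funLog f g x = ∫ l in Set.Ioo (0:ℝ) 1, funGeom f g l x := by
    rw [funLog, intervalIntegral.integral_of_le zero_le_one,
      MeasureTheory.setIntegral_congr_set Ioo_ae_eq_Ioc]
  constructor
  · -- harmonic ≤ log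
    apply csSup_le (harmSet_nonempty φ₀ c hm _)
    rintro r ⟨φ, c₁, c₂, h1, h2, rfl⟩
    have key : (∫ l in Set.Ioo (0:ℝ) 1, ((φ x - c₁) + (c₁ - c₂) * l))
        ≤ ∫ l in Set.Ioo (0:ℝ) 1, funGeom f g l x := by
      apply MeasureTheory.setIntegral_mono_on
      · exact (ContinuousOn.integrableOn_compact isCompact_Icc
          ((continuous_const.add (continuous_const.mul continuous_id)).continuousOn)).mono_set
          Set.Ioo_subset_Icc_self
      · exact integrableOn_funGeom φ₀ c hm
      · exact measurableSet_Ioo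
      · intro l hl
        have := affine_le_funGeom (x := x) φ₀ c hm h1 h2 hl
        nlinarith [this]
    rw [affine_Ioo_integral] at key
    rw [hLog]
    nlinarith [key]
  · -- log ≤ arithmetic
    have key : (∫ l in Set.Ioo (0:ℝ) 1, funGeom f g l x)
        ≤ ∫ l in Set.Ioo (0:ℝ) 1, (f x + (g x - f x) * l) := by
      apply MeasureTheory.setIntegral_mono_on
      · exact integrableOn_funGeom φ₀ c hm
      · exact (ContinuousOn.integrableOn_compact isCompact_Icc
          ((continuous_const.add (continuous_const.mul continuous_id)).continuousOn)).mono_set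
          Set.Ioo_subset_Icc_self
      · exact measurableSet_Ioo
      · intro l hl
        have := funGeom_le_affine (x := x) φ₀ c hm hl
        nlinarith [this]
    rw [affine_Ioo_integral] at key
    rw [hLog]
    nlinarith [key]
end

section
/- Let E be a real normed vector space and let f, g : E → ℝ be convex continuous functions admitting a common continuous affine minorant. Let x ∈ E and let x*, z* ∈ E* be subgradients, i.e. f(u) ≥ f(x) + x*(u − x) and g(u) ≥ g(x) + z*(u − x) for all u ∈ E. Then for all real numbers c₁, c₂ such that x*(u) − g(u) ≤ c₁ and z*(u) − f(u) ≤ c₂ for all u ∈ E, one has 0 ≤ (f ∇ g)(x) − L(f,g)(x) ≤ (1/12)·[ (g(x) + c₁ − x*(x)) + (f(x) + c₂ − z*(x)) ], where (f ∇ g)(x) = (f(x)+g(x))/2 and L(f,g)(x) = ∫₀¹ (f ♯_t g)(x) dt. -/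
open Real
open MeasureTheory intervalIntegral Set

lemma betaR_integrable {u v : ℝ} (hu : 0 < u) (hv : 0 < v) :
    IntervalIntegrable (fun t : ℝ => t ^ (u - 1) * (1 - t) ^ (v - 1)) volume 0 1 := by
  have hc : IntervalIntegrable (fun x : ℝ => (x : ℂ) ^ ((u : ℂ) - 1) * (1 - (x : ℂ)) ^ ((v : ℂ) - 1))
      volume 0 1 := Complex.betaIntegral_convergent (by simpa using hu) (by simpa using hv)
  rw [intervalIntegrable_iff_integrableOn_Ioc_of_le (by norm_num)] at hc ⊢
  refine (hc.re.congr ?_)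
  filter_upwards [ae_restrict_mem measurableSet_Ioc] with t ht
  have h1 : (0:ℝ) ≤ t := le_of_lt ht.1
  have h2 : (0:ℝ) ≤ 1 - t := by linarith [ht.2]
  rw [show ((u:ℂ) - 1) = ((u - 1 : ℝ) : ℂ) by push_cast; ring,
    show ((v:ℂ) - 1) = ((v - 1 : ℝ) : ℂ) by push_cast; ring,
    ← Complex.ofReal_cpow h1, show (1 - (t:ℂ)) = ((1 - t : ℝ) : ℂ) by push_cast; ring, ← Complex.ofReal_cpow h2, ← Complex.ofReal_mul]
  simp

lemma betaR_eval {u v : ℝ} (hu : 0 < u) (hv : 0 < v) :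
    ∫ t in (0:ℝ)..1, t ^ (u - 1) * (1 - t) ^ (v - 1)
      = Real.Gamma u * Real.Gamma v / Real.Gamma (u + v) := by
  have h := Complex.Gamma_mul_Gamma_eq_betaIntegral (s := (u:ℂ)) (t := (v:ℂ))
    (by simpa using hu) (by simpa using hv)
  have hb : Complex.betaIntegral u v
      = ((∫ t in (0:ℝ)..1, t ^ (u - 1) * (1 - t) ^ (v - 1) : ℝ) : ℂ) := by
    rw [Complex.betaIntegral]
    rw [show (∫ t in (0:ℝ)..1, (t:ℂ) ^ ((u:ℂ) - 1) * (1 - (t:ℂ)) ^ ((v:ℂ) - 1))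
        = ∫ t in (0:ℝ)..1, ((t ^ (u - 1) * (1 - t) ^ (v - 1) : ℝ) : ℂ) from
      intervalIntegral.integral_congr fun t ht => ?_]
    · exact_mod_cast RCLike.intervalIntegral_ofReal (𝕜 := ℂ)
    rw [uIcc_of_le (by norm_num)] at ht
    have h1 : (0:ℝ) ≤ t := ht.1
    have h2 : (0:ℝ) ≤ 1 - t := by linarith [ht.2]
    rw [show ((u:ℂ) - 1) = ((u - 1 : ℝ) : ℂ) by push_cast; ring,
      show ((v:ℂ) - 1) = ((v - 1 : ℝ) : ℂ) by push_cast; ring,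
      ← Complex.ofReal_cpow h1, show (1 - (t:ℂ)) = ((1 - t : ℝ) : ℂ) by push_cast; ring, ← Complex.ofReal_cpow h2, ← Complex.ofReal_mul]
  rw [hb, Complex.Gamma_ofReal, Complex.Gamma_ofReal, show (u:ℂ) + v = ((u+v : ℝ) : ℂ) by push_cast; ring,
    Complex.Gamma_ofReal, ← Complex.ofReal_mul, ← Complex.ofReal_mul] at h
  have := Complex.ofReal_inj.mp h
  have hne : Real.Gamma (u + v) ≠ 0 := (Real.Gamma_pos_of_pos (by linarith)).ne'
  field_simp
  linarith [this]

section Harm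
variable {E : Type*} [NormedAddCommGroup E] [NormedSpace ℝ E]
  (f g : E → ℝ) (x : E) (φ₀ : E →L[ℝ] ℝ) (d₁ d₂ : ℝ)
  (hd₁ : ∀ u : E, φ₀ u - f u ≤ d₁) (hd₂ : ∀ u : E, φ₀ u - g u ≤ d₂)

def harmSet (t : ℝ) : Set ℝ :=
  { r : ℝ | ∃ φ : E →L[ℝ] ℝ, ∃ c₁ c₂ : ℝ,
    (∀ u : E, φ u - f u ≤ c₁) ∧ (∀ u : E, φ u - g u ≤ c₂) ∧
    r = φ x - (1 - t) * c₁ - t * c₂ }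

include hd₁ hd₂ in
lemma harmSet_nonempty_s17 (t : ℝ) : (harmSet f g x t).Nonempty :=
  ⟨φ₀ x - (1 - t) * d₁ - t * d₂, φ₀, d₁, d₂, hd₁, hd₂, rfl⟩

lemma harmSet_bddAbove_s17 {t : ℝ} (ht0 : 0 ≤ t) (ht1 : t ≤ 1) :
    (1 - t) * f x + t * g x ∈ upperBounds (harmSet f g x t) := by
  rintro r ⟨φ, c₁, c₂, h1, h2, rfl⟩
  have e1 : φ x - c₁ ≤ f x := by linarith [h1 x]
  have e2 : φ x - c₂ ≤ g x := by linarith [h2 x]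
  nlinarith [mul_le_mul_of_nonneg_left e1 (by linarith : (0:ℝ) ≤ 1 - t),
    mul_le_mul_of_nonneg_left e2 ht0]

include hd₁ hd₂ in
lemma funHarm_le {t : ℝ} (ht0 : 0 ≤ t) (ht1 : t ≤ 1) :
    funHarm f g t x ≤ (1 - t) * f x + t * g x :=
  csSup_le (harmSet_nonempty_s17 f g x φ₀ d₁ d₂ hd₁ hd₂ t) (harmSet_bddAbove_s17 f g x ht0 ht1)

include hd₁ hd₂ in
lemma le_funHarm_s17 {t : ℝ} (ht0 : 0 ≤ t) (ht1 : t ≤ 1) :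
    φ₀ x - (1 - t) * d₁ - t * d₂ ≤ funHarm f g t x :=
  le_csSup ⟨_, harmSet_bddAbove_s17 f g x ht0 ht1⟩
    ⟨φ₀, d₁, d₂, hd₁, hd₂, rfl⟩

include hd₁ hd₂ in
lemma funHarm_convexOn :
    ConvexOn ℝ (Icc (0:ℝ) 1) (fun t => funHarm f g t x) := by
  refine ⟨convex_Icc _ _, fun p hp q hq α β hα hβ hαβ => ?_⟩
  refine csSup_le (harmSet_nonempty_s17 f g x φ₀ d₁ d₂ hd₁ hd₂ _) ?_
  rintro r ⟨φ, c₁, c₂, h1, h2, rfl⟩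
  have hrp : φ x - (1 - p) * c₁ - p * c₂ ≤ funHarm f g p x :=
    le_funHarm_s17 f g x φ c₁ c₂ h1 h2 hp.1 hp.2
  have hrq : φ x - (1 - q) * c₁ - q * c₂ ≤ funHarm f g q x :=
    le_funHarm_s17 f g x φ c₁ c₂ h1 h2 hq.1 hq.2
  have : φ x - (1 - (α • p + β • q)) * c₁ - (α • p + β • q) * c₂
      = α * (φ x - (1 - p) * c₁ - p * c₂) + β * (φ x - (1 - q) * c₁ - q * c₂) := by
    simp only [smul_eq_mul]; linear_combination (c₁ - φ x) * hαβ
  rw [this]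
  simp only [smul_eq_mul]
  exact add_le_add (mul_le_mul_of_nonneg_left hrp hα) (mul_le_mul_of_nonneg_left hrq hβ)

include hd₁ hd₂ in
lemma funHarm_continuousOn :
    ContinuousOn (fun t => funHarm f g t x) (Ioo (0:ℝ) 1) := by
  have := (funHarm_convexOn f g x φ₀ d₁ d₂ hd₁ hd₂).continuousOn_interior
  rwa [interior_Icc] at this

end Harm

lemma intervalIntegrable_congr_Icc {f g : ℝ → ℝ} (h : ∀ t ∈ Icc (0:ℝ) 1, f t = g t)
    (hg : IntervalIntegrable g volume 0 1) : IntervalIntegrable f volume 0 1 := by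
  rw [intervalIntegrable_iff_integrableOn_Ioc_of_le (by norm_num)] at hg ⊢
  exact hg.congr (by
    filter_upwards [ae_restrict_mem measurableSet_Ioc] with t ht
    exact (h t (Ioc_subset_Icc_self ht)).symm)

lemma integral_congr_Icc {f g : ℝ → ℝ} (h : ∀ t ∈ Icc (0:ℝ) 1, f t = g t) :
    ∫ t in (0:ℝ)..1, f t = ∫ t in (0:ℝ)..1, g t :=
  intervalIntegral.integral_congr (by rwa [uIcc_of_le (by norm_num)])

section WB
variable {l : ℝ} (hl : l ∈ Ioo (0:ℝ) 1)
include hl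

lemma WB1_eq : ∀ t ∈ Icc (0:ℝ) 1,
    t ^ (l-1) * (1-t) ^ (-l) * (1-t) = t ^ (l-1) * (1-t) ^ ((2-l)-1) := by
  intro t ht
  have h2 : (0:ℝ) ≤ 1 - t := by linarith [ht.2]
  rw [mul_assoc]
  congr 1
  rw [show (2-l-1 : ℝ) = -l + 1 by ring, Real.rpow_add' h2 (by intro h; nlinarith [hl.2]),
    Real.rpow_one]

lemma WB2_eq : ∀ t ∈ Icc (0:ℝ) 1,
    t ^ (l-1) * (1-t) ^ (-l) * t = t ^ ((l+1)-1) * (1-t) ^ ((1-l)-1) := by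
  intro t ht
  rw [show ((l+1)-1 : ℝ) = (l-1) + 1 by ring, Real.rpow_add' ht.1 (by intro h; nlinarith [hl.1]),
    Real.rpow_one, show ((1-l)-1 : ℝ) = -l by ring]
  ring

lemma WB3_eq : ∀ t ∈ Icc (0:ℝ) 1,
    t ^ (l-1) * (1-t) ^ (-l) * (t * (1-t)) = t ^ ((l+1)-1) * (1-t) ^ ((2-l)-1) := by
  intro t ht
  have h2 : (0:ℝ) ≤ 1 - t := by linarith [ht.2]
  rw [show ((l+1)-1 : ℝ) = (l-1) + 1 by ring, Real.rpow_add' ht.1 (by intro h; nlinarith [hl.1]),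
    Real.rpow_one, show (2-l-1 : ℝ) = -l + 1 by ring,
    Real.rpow_add' h2 (by intro h; nlinarith [hl.2]), Real.rpow_one]
  ring

lemma gamma_refl : Real.Gamma l * Real.Gamma (1 - l) = π / Real.sin (π * l) :=
  Real.Gamma_mul_Gamma_one_sub l

lemma WB1_int : IntervalIntegrable (fun t : ℝ => t ^ (l-1) * (1-t) ^ (-l) * (1-t)) volume 0 1 :=
  intervalIntegrable_congr_Icc (WB1_eq hl) (betaR_integrable hl.1 (by nlinarith [hl.2]))

lemma WB2_int : IntervalIntegrable (fun t : ℝ => t ^ (l-1) * (1-t) ^ (-l) * t) volume 0 1 :=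
  intervalIntegrable_congr_Icc (WB2_eq hl) (betaR_integrable (by nlinarith [hl.1]) (by nlinarith [hl.2]))

lemma WB3_int : IntervalIntegrable (fun t : ℝ => t ^ (l-1) * (1-t) ^ (-l) * (t * (1-t))) volume 0 1 :=
  intervalIntegrable_congr_Icc (WB3_eq hl) (betaR_integrable (by nlinarith [hl.1]) (by nlinarith [hl.2]))

lemma Gamma_two' : Real.Gamma 2 = 1 := by
  rw [show (2:ℝ) = 1 + 1 by norm_num, Real.Gamma_add_one one_ne_zero, Real.Gamma_one]; norm_num

lemma Gamma_three' : Real.Gamma 3 = 2 := by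
  rw [show (3:ℝ) = 2 + 1 by norm_num, Real.Gamma_add_one two_ne_zero, Gamma_two' hl]; norm_num

lemma WB1_val : ∫ t in (0:ℝ)..1, t ^ (l-1) * (1-t) ^ (-l) * (1-t)
    = (1 - l) * (π / Real.sin (π * l)) := by
  rw [integral_congr_Icc (WB1_eq hl), betaR_eval hl.1 (by nlinarith [hl.2]),
    show l + (2 - l) = 2 by ring, Gamma_two' hl,
    show (2:ℝ) - l = (1 - l) + 1 by ring, Real.Gamma_add_one (by nlinarith [hl.2])]
  rw [div_one, show Real.Gamma l * ((1-l) * Real.Gamma (1-l)) = (1-l) * (Real.Gamma l * Real.Gamma (1-l)) by ring,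
    gamma_refl hl]

lemma WB2_val : ∫ t in (0:ℝ)..1, t ^ (l-1) * (1-t) ^ (-l) * t
    = l * (π / Real.sin (π * l)) := by
  rw [integral_congr_Icc (WB2_eq hl), betaR_eval (by nlinarith [hl.1]) (by nlinarith [hl.2]),
    show l + 1 + (1 - l) = 2 by ring, Gamma_two' hl, Real.Gamma_add_one (by nlinarith [hl.1])]
  rw [div_one, show l * Real.Gamma l * Real.Gamma (1-l) = l * (Real.Gamma l * Real.Gamma (1-l)) by ring,
    gamma_refl hl]

lemma WB3_val : ∫ t in (0:ℝ)..1, t ^ (l-1) * (1-t) ^ (-l) * (t * (1-t))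
    = l * (1 - l) / 2 * (π / Real.sin (π * l)) := by
  rw [integral_congr_Icc (WB3_eq hl), betaR_eval (by nlinarith [hl.1]) (by nlinarith [hl.2]),
    show l + 1 + (2 - l) = 3 by ring, Gamma_three' hl,
    Real.Gamma_add_one (by nlinarith [hl.1]),
    show (2:ℝ) - l = (1 - l) + 1 by ring, Real.Gamma_add_one (by nlinarith [hl.2])]
  rw [show l * Real.Gamma l * ((1-l) * Real.Gamma (1-l)) = l * (1-l) * (Real.Gamma l * Real.Gamma (1-l)) by ring,
    gamma_refl hl]
  ring

end WB

section Main
variable {E : Type*} [NormedAddCommGroup E] [NormedSpace ℝ E]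
  (f g : E → ℝ) (x : E) (xs zs : E →L[ℝ] ℝ) (c₁ c₂ : ℝ)
  (hA : ∀ u : E, xs u - f u ≤ xs x - f x) (hc₁ : ∀ u : E, xs u - g u ≤ c₁)
  (hB : ∀ u : E, zs u - g u ≤ zs x - g x) (hc₂ : ∀ u : E, zs u - f u ≤ c₂)

include hA hc₁ in
lemma funHarm_ub : ∀ t ∈ Icc (0:ℝ) 1, funHarm f g t x ≤ (1-t) * f x + t * g x :=
  fun _ ht => funHarm_le f g x xs (xs x - f x) c₁ hA hc₁ ht.1 ht.2

include hA hc₁ hB hc₂ in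
lemma funHarm_lb : ∀ t ∈ Icc (0:ℝ) 1,
    (1-t) * f x + t * g x
      - t * (1-t) * ((g x + c₁ - xs x) + (f x + c₂ - zs x)) ≤ funHarm f g t x := by
  intro t ht
  rcases le_total (t * (g x + c₁ - xs x)) ((1-t) * (f x + c₂ - zs x)) with hcase | hcase
  · have h1 := le_funHarm_s17 f g x xs (xs x - f x) c₁ hA hc₁ ht.1 ht.2
    have h1' : (1-t) * f x + t * g x - t * (g x + c₁ - xs x) ≤ funHarm f g t x := by
      have e : (1-t) * f x + t * g x - t * (g x + c₁ - xs x)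
          = xs x - (1-t) * (xs x - f x) - t * c₁ := by ring
      rw [e]; exact h1
    have key : t * (g x + c₁ - xs x)
        ≤ t * (1-t) * ((g x + c₁ - xs x) + (f x + c₂ - zs x)) := by
      nlinarith [mul_le_mul_of_nonneg_left hcase ht.1]
    linarith
  · have h2 := le_funHarm_s17 f g x zs c₂ (zs x - g x) hc₂ hB ht.1 ht.2
    have h2' : (1-t) * f x + t * g x - (1-t) * (f x + c₂ - zs x) ≤ funHarm f g t x := by
      have e : (1-t) * f x + t * g x - (1-t) * (f x + c₂ - zs x)
          = zs x - (1-t) * c₂ - t * (zs x - g x) := by ring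
      rw [e]; exact h2
    have key : (1-t) * (f x + c₂ - zs x)
        ≤ t * (1-t) * ((g x + c₁ - xs x) + (f x + c₂ - zs x)) := by
      nlinarith [mul_le_mul_of_nonneg_left hcase (by linarith [ht.2] : (0:ℝ) ≤ 1 - t)]
    linarith

include hA hc₁ hB hc₂ in
lemma funHarm_abs : ∀ t ∈ Icc (0:ℝ) 1,
    |funHarm f g t x| ≤ |f x| + |g x| + ((g x + c₁ - xs x) + (f x + c₂ - zs x)) := by
  intro t ht
  have ha : 0 ≤ g x + c₁ - xs x := by linarith [hc₁ x]
  have hb : 0 ≤ f x + c₂ - zs x := by linarith [hc₂ x]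
  have hub := funHarm_ub f g x xs c₁ hA hc₁ t ht
  have hlb := funHarm_lb f g x xs zs c₁ c₂ hA hc₁ hB hc₂ t ht
  rw [abs_le]
  constructor
  · have htt : t * (1-t) ≤ 1 := by nlinarith [ht.1, ht.2]
    have h3 : t * (1-t) * ((g x + c₁ - xs x) + (f x + c₂ - zs x))
        ≤ (g x + c₁ - xs x) + (f x + c₂ - zs x) :=
      mul_le_of_le_one_left (by linarith) htt
    have e1 : -|f x| ≤ (1-t) * f x := by
      nlinarith [mul_nonneg (by linarith [ht.2] : (0:ℝ) ≤ 1-t)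
        (by linarith [neg_abs_le (f x)] : 0 ≤ f x + |f x|), mul_nonneg ht.1 (abs_nonneg (f x))]
    have e2 : -|g x| ≤ t * g x := by
      nlinarith [mul_nonneg ht.1 (by linarith [neg_abs_le (g x)] : 0 ≤ g x + |g x|),
        mul_nonneg (by linarith [ht.2] : (0:ℝ) ≤ 1-t) (abs_nonneg (g x))]
    linarith
  · have e1 : (1-t) * f x ≤ |f x| := by
      nlinarith [mul_nonneg (by linarith [ht.2] : (0:ℝ) ≤ 1-t)
        (by linarith [le_abs_self (f x)] : 0 ≤ |f x| - f x), mul_nonneg ht.1 (abs_nonneg (f x))]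
    have e2 : t * g x ≤ |g x| := by
      nlinarith [mul_nonneg ht.1 (by linarith [le_abs_self (g x)] : 0 ≤ |g x| - g x),
        mul_nonneg (by linarith [ht.2] : (0:ℝ) ≤ 1-t) (abs_nonneg (g x))]
    linarith

include hA hc₁ in
lemma funHarm_aesm : AEStronglyMeasurable (fun t => funHarm f g t x)
    (volume.restrict (Ioc (0:ℝ) 1)) := by
  have hcont := funHarm_continuousOn f g x xs (xs x - f x) c₁ hA hc₁
  have h2 : AEStronglyMeasurable (fun t => funHarm f g t x)
      (volume.restrict (Ioo (0:ℝ) 1)) := hcont.aestronglyMeasurable measurableSet_Ioo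
  rwa [Measure.restrict_congr_set Ioo_ae_eq_Ioc] at h2

end Main

section Main2
variable {E : Type*} [NormedAddCommGroup E] [NormedSpace ℝ E]
  (f g : E → ℝ) (x : E) (xs zs : E →L[ℝ] ℝ) (c₁ c₂ : ℝ)
  (hA : ∀ u : E, xs u - f u ≤ xs x - f x) (hc₁ : ∀ u : E, xs u - g u ≤ c₁)
  (hB : ∀ u : E, zs u - g u ≤ zs x - g x) (hc₂ : ∀ u : E, zs u - f u ≤ c₂)

include hA hc₁ hB hc₂ in
lemma WH_integrable {l : ℝ} (hl : l ∈ Ioo (0:ℝ) 1) :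
    IntervalIntegrable (fun t : ℝ => t ^ (l-1) * (1-t) ^ (-l) * funHarm f g t x) volume 0 1 := by
  have hC0 : 0 ≤ |f x| + |g x| + ((g x + c₁ - xs x) + (f x + c₂ - zs x)) := by
    have h1 := hc₁ x; have h2 := hc₂ x
    have := abs_nonneg (f x); have := abs_nonneg (g x)
    linarith
  have hW_int : IntervalIntegrable (fun t : ℝ => t ^ (l-1) * (1-t) ^ (-l)) volume 0 1 := by
    have := betaR_integrable hl.1 (by nlinarith [hl.2] : (0:ℝ) < 1 - l)
    simpa only [show (1:ℝ)-l-1 = -l from by ring] using this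
  have hWC_int := hW_int.mul_const (|f x| + |g x| + ((g x + c₁ - xs x) + (f x + c₂ - zs x)))
  rw [intervalIntegrable_iff_integrableOn_Ioc_of_le (by norm_num)] at hWC_int ⊢
  refine MeasureTheory.Integrable.mono hWC_int ?_ ?_
  · have hWm : Measurable (fun t : ℝ => t ^ (l-1) * (1-t) ^ (-l)) := by fun_prop
    exact hWm.aestronglyMeasurable.mul (funHarm_aesm f g x xs c₁ hA hc₁)
  · filter_upwards [ae_restrict_mem measurableSet_Ioc] with t ht
    have hW0 : 0 ≤ t ^ (l-1) * (1-t) ^ (-l) :=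
      mul_nonneg (Real.rpow_nonneg (le_of_lt ht.1) _) (Real.rpow_nonneg (by linarith [ht.2]) _)
    have habs := funHarm_abs f g x xs zs c₁ c₂ hA hc₁ hB hc₂ t (Ioc_subset_Icc_self ht)
    rw [Real.norm_eq_abs, Real.norm_eq_abs, abs_mul, abs_of_nonneg hW0,
      abs_of_nonneg (mul_nonneg hW0 hC0)]
    exact mul_le_mul_of_nonneg_left habs hW0

include hA hc₁ hB hc₂ in
lemma funGeom_bounds {l : ℝ} (hl : l ∈ Ioo (0:ℝ) 1) :
    (1-l) * f x + l * g x
        - ((g x + c₁ - xs x) + (f x + c₂ - zs x)) * (l * (1-l) / 2) ≤ funGeom f g l x ∧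
      funGeom f g l x ≤ (1-l) * f x + l * g x := by
  have hπ := Real.pi_pos
  have hs : 0 < Real.sin (π * l) :=
    Real.sin_pos_of_pos_of_lt_pi (by nlinarith [hl.1]) (by nlinarith [hl.2])
  have hsd : 0 < Real.sin (π * l) / π := div_pos hs hπ
  have hWH_int := WH_integrable f g x xs zs c₁ c₂ hA hc₁ hB hc₂ hl
  -- upper bound
  have eu : (fun t : ℝ => t ^ (l-1) * (1-t) ^ (-l) * ((1-t) * f x + t * g x))
      = fun t : ℝ => f x * (t ^ (l-1) * (1-t) ^ (-l) * (1-t))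
        + g x * (t ^ (l-1) * (1-t) ^ (-l) * t) := by
    funext t; ring
  have hub_int : IntervalIntegrable
      (fun t : ℝ => t ^ (l-1) * (1-t) ^ (-l) * ((1-t) * f x + t * g x)) volume 0 1 := by
    rw [eu]; exact ((WB1_int hl).const_mul (f x)).add ((WB2_int hl).const_mul (g x))
  have hub_val : ∫ t in (0:ℝ)..1, t ^ (l-1) * (1-t) ^ (-l) * ((1-t) * f x + t * g x)
      = f x * ((1-l) * (π / Real.sin (π * l))) + g x * (l * (π / Real.sin (π * l))) := by
    rw [eu, intervalIntegral.integral_add ((WB1_int hl).const_mul (f x))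
        ((WB2_int hl).const_mul (g x)),
      intervalIntegral.integral_const_mul, intervalIntegral.integral_const_mul,
      WB1_val hl, WB2_val hl]
  have hJub : (∫ t in (0:ℝ)..1, t ^ (l-1) * (1-t) ^ (-l) * funHarm f g t x)
      ≤ f x * ((1-l) * (π / Real.sin (π * l))) + g x * (l * (π / Real.sin (π * l))) := by
    rw [← hub_val]
    refine intervalIntegral.integral_mono_on (by norm_num) hWH_int hub_int fun t ht => ?_
    have hW0 : 0 ≤ t ^ (l-1) * (1-t) ^ (-l) :=
      mul_nonneg (Real.rpow_nonneg ht.1 _) (Real.rpow_nonneg (by linarith [ht.2]) _)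
    exact mul_le_mul_of_nonneg_left (funHarm_ub f g x xs c₁ hA hc₁ t ht) hW0
  -- lower bound
  have el : (fun t : ℝ => t ^ (l-1) * (1-t) ^ (-l)
        * ((1-t) * f x + t * g x - t * (1-t) * ((g x + c₁ - xs x) + (f x + c₂ - zs x))))
      = fun t : ℝ => (f x * (t ^ (l-1) * (1-t) ^ (-l) * (1-t))
          + g x * (t ^ (l-1) * (1-t) ^ (-l) * t))
        - ((g x + c₁ - xs x) + (f x + c₂ - zs x)) * (t ^ (l-1) * (1-t) ^ (-l) * (t * (1-t))) := by
    funext t; ring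
  have hlb_int : IntervalIntegrable (fun t : ℝ => t ^ (l-1) * (1-t) ^ (-l)
      * ((1-t) * f x + t * g x - t * (1-t) * ((g x + c₁ - xs x) + (f x + c₂ - zs x))))
      volume 0 1 := by
    rw [el]
    exact (((WB1_int hl).const_mul (f x)).add ((WB2_int hl).const_mul (g x))).sub
      ((WB3_int hl).const_mul _)
  have hlb_val : ∫ t in (0:ℝ)..1, t ^ (l-1) * (1-t) ^ (-l)
        * ((1-t) * f x + t * g x - t * (1-t) * ((g x + c₁ - xs x) + (f x + c₂ - zs x)))
      = f x * ((1-l) * (π / Real.sin (π * l))) + g x * (l * (π / Real.sin (π * l)))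
        - ((g x + c₁ - xs x) + (f x + c₂ - zs x))
          * (l * (1-l) / 2 * (π / Real.sin (π * l))) := by
    rw [el, intervalIntegral.integral_sub
        (((WB1_int hl).const_mul (f x)).add ((WB2_int hl).const_mul (g x)))
        ((WB3_int hl).const_mul _),
      intervalIntegral.integral_add ((WB1_int hl).const_mul (f x))
        ((WB2_int hl).const_mul (g x)),
      intervalIntegral.integral_const_mul, intervalIntegral.integral_const_mul,
      intervalIntegral.integral_const_mul, WB1_val hl, WB2_val hl, WB3_val hl]
  have hJlb : f x * ((1-l) * (π / Real.sin (π * l))) + g x * (l * (π / Real.sin (π * l)))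
        - ((g x + c₁ - xs x) + (f x + c₂ - zs x)) * (l * (1-l) / 2 * (π / Real.sin (π * l)))
      ≤ ∫ t in (0:ℝ)..1, t ^ (l-1) * (1-t) ^ (-l) * funHarm f g t x := by
    rw [← hlb_val]
    refine intervalIntegral.integral_mono_on (by norm_num) hlb_int hWH_int fun t ht => ?_
    have hW0 : 0 ≤ t ^ (l-1) * (1-t) ^ (-l) :=
      mul_nonneg (Real.rpow_nonneg ht.1 _) (Real.rpow_nonneg (by linarith [ht.2]) _)
    exact mul_le_mul_of_nonneg_left
      (funHarm_lb f g x xs zs c₁ c₂ hA hc₁ hB hc₂ t ht) hW0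
  constructor
  · have h := mul_le_mul_of_nonneg_left hJlb (le_of_lt hsd)
    rw [funGeom]
    calc (1-l) * f x + l * g x
        - ((g x + c₁ - xs x) + (f x + c₂ - zs x)) * (l * (1-l) / 2)
        = Real.sin (π * l) / π * (f x * ((1-l) * (π / Real.sin (π * l)))
            + g x * (l * (π / Real.sin (π * l)))
            - ((g x + c₁ - xs x) + (f x + c₂ - zs x))
              * (l * (1-l) / 2 * (π / Real.sin (π * l)))) := by
          have hk : Real.sin (π * l) / π * (π / Real.sin (π * l)) = 1 := by
            field_simp [hs.ne', hπ.ne']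
          linear_combination (-((1-l) * f x + l * g x
            - ((g x + c₁ - xs x) + (f x + c₂ - zs x)) * (l * (1-l) / 2))) * hk
      _ ≤ _ := h
  · have h := mul_le_mul_of_nonneg_left hJub (le_of_lt hsd)
    rw [funGeom]
    calc Real.sin (π * l) / π * ∫ t in (0:ℝ)..1, t ^ (l-1) * (1-t) ^ (-l) * funHarm f g t x
        ≤ Real.sin (π * l) / π * (f x * ((1-l) * (π / Real.sin (π * l)))
            + g x * (l * (π / Real.sin (π * l)))) := h
      _ = (1-l) * f x + l * g x := by field_simp

end Main2

lemma ae_ne_real (c : ℝ) : ∀ᵐ l : ℝ, l ≠ c := by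
  have h : {a : ℝ | ¬ a ≠ c} = {c} := by ext a; simp
  rw [ae_iff, h]; exact measure_singleton c

section Main3
variable {E : Type*} [NormedAddCommGroup E] [NormedSpace ℝ E]
  (f g : E → ℝ) (x : E) (xs zs : E →L[ℝ] ℝ) (c₁ c₂ : ℝ)
  (hA : ∀ u : E, xs u - f u ≤ xs x - f x) (hc₁ : ∀ u : E, xs u - g u ≤ c₁)
  (hB : ∀ u : E, zs u - g u ≤ zs x - g x) (hc₂ : ∀ u : E, zs u - f u ≤ c₂)

include hA hc₁ hB hc₂ in
lemma funGeom_contOn : ContinuousOn (fun l => funGeom f g l x) (Ioo (0:ℝ) 1) := by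
  intro l₀ hl₀
  apply ContinuousAt.continuousWithinAt
  have hlo : (0:ℝ) < l₀ / 2 := by linarith [hl₀.1]
  have hlo2 : l₀ / 2 < l₀ := by linarith [hl₀.1]
  have hhi : l₀ < (l₀ + 1) / 2 := by linarith [hl₀.2]
  have hhi2 : (l₀ + 1) / 2 < 1 := by linarith [hl₀.2]
  set C : ℝ := |f x| + |g x| + ((g x + c₁ - xs x) + (f x + c₂ - zs x)) with hC
  have hC0 : 0 ≤ C := by
    have h1 := hc₁ x; have h2 := hc₂ x
    have := abs_nonneg (f x); have := abs_nonneg (g x)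
    rw [hC]; linarith
  have hInt : ContinuousAt
      (fun l => ∫ t in (0:ℝ)..1, t ^ (l-1) * (1-t) ^ (-l) * funHarm f g t x) l₀ := by
    apply intervalIntegral.continuousAt_of_dominated_interval
      (bound := fun t : ℝ => t ^ (l₀/2 - 1) * (1-t) ^ (-((l₀+1)/2)) * C)
    · refine Filter.Eventually.of_forall fun l => ?_
      rw [Set.uIoc_of_le (by norm_num : (0:ℝ) ≤ 1)]
      have hWm : Measurable (fun t : ℝ => t ^ (l-1) * (1-t) ^ (-l)) := by fun_prop
      exact hWm.aestronglyMeasurable.mul (funHarm_aesm f g x xs c₁ hA hc₁)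
    · have hev : ∀ᶠ l in nhds l₀, l ∈ Ioo (l₀/2) ((l₀+1)/2) :=
        Filter.eventually_of_mem (isOpen_Ioo.mem_nhds ⟨hlo2, hhi⟩) fun _ h => h
      filter_upwards [hev] with l hl
      refine Filter.Eventually.of_forall fun t ht => ?_
      rw [Set.uIoc_of_le (by norm_num : (0:ℝ) ≤ 1)] at ht
      have habs := funHarm_abs f g x xs zs c₁ c₂ hA hc₁ hB hc₂ t (Ioc_subset_Icc_self ht)
      have hW0 : 0 ≤ t ^ (l-1) * (1-t) ^ (-l) :=
        mul_nonneg (Real.rpow_nonneg (le_of_lt ht.1) _)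
          (Real.rpow_nonneg (by linarith [ht.2]) _)
      have h1 : t ^ (l-1) ≤ t ^ (l₀/2 - 1) :=
        Real.rpow_le_rpow_of_exponent_ge ht.1 ht.2 (by linarith [hl.1])
      have h2 : (1-t) ^ (-l) ≤ (1-t) ^ (-((l₀+1)/2)) := by
        rcases eq_or_lt_of_le ht.2 with he | hlt
        · rw [← he]
          norm_num
          rw [Real.zero_rpow (by intro hz; nlinarith [hl.1, hlo]),
            Real.zero_rpow (by intro hz; nlinarith [hl₀.1])]
        · exact Real.rpow_le_rpow_of_exponent_ge (by linarith) (by linarith [ht.1])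
            (by linarith [hl.2])
      have hWle : t ^ (l-1) * (1-t) ^ (-l) ≤ t ^ (l₀/2 - 1) * (1-t) ^ (-((l₀+1)/2)) :=
        mul_le_mul h1 h2 (Real.rpow_nonneg (by linarith [ht.2]) _)
          (Real.rpow_nonneg (le_of_lt ht.1) _)
      calc ‖t ^ (l-1) * (1-t) ^ (-l) * funHarm f g t x‖
          = t ^ (l-1) * (1-t) ^ (-l) * |funHarm f g t x| := by
            rw [Real.norm_eq_abs, abs_mul, abs_of_nonneg hW0]
        _ ≤ t ^ (l-1) * (1-t) ^ (-l) * C := mul_le_mul_of_nonneg_left habs hW0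
        _ ≤ t ^ (l₀/2 - 1) * (1-t) ^ (-((l₀+1)/2)) * C :=
            mul_le_mul_of_nonneg_right hWle hC0
    · have hb : IntervalIntegrable
          (fun t : ℝ => t ^ (l₀/2 - 1) * (1-t) ^ (-((l₀+1)/2))) volume 0 1 := by
        have := betaR_integrable hlo (by linarith : (0:ℝ) < 1 - (l₀+1)/2)
        simpa only [show (1:ℝ) - (l₀+1)/2 - 1 = -((l₀+1)/2) from by ring] using this
      exact hb.mul_const C
    · refine Filter.Eventually.mono (ae_ne_real 1) fun t ht1 htmem => ?_
      rw [Set.uIoc_of_le (by norm_num : (0:ℝ) ≤ 1)] at htmem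
      have ht0 : 0 < t := htmem.1
      have ht1' : t < 1 := lt_of_le_of_ne htmem.2 ht1
      have c1 : ContinuousAt (fun l : ℝ => t ^ (l-1)) l₀ :=
        (Real.continuousAt_const_rpow (ne_of_gt ht0)).comp
          (continuousAt_id.sub continuousAt_const)
      have c2 : ContinuousAt (fun l : ℝ => (1-t) ^ (-l)) l₀ :=
        (Real.continuousAt_const_rpow (ne_of_gt (by linarith : (0:ℝ) < 1 - t))).comp continuousAt_id.neg
      exact (c1.mul c2).mul continuousAt_const
  have hsin : ContinuousAt (fun l : ℝ => Real.sin (π * l) / π) l₀ :=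
    ((Real.continuous_sin.comp (continuous_const.mul continuous_id)).div_const π).continuousAt
  have := hsin.mul hInt
  simpa only [funGeom, Pi.mul_def] using this

end Main3

section Main4
variable {E : Type*} [NormedAddCommGroup E] [NormedSpace ℝ E]
  (f g : E → ℝ) (x : E) (xs zs : E →L[ℝ] ℝ) (c₁ c₂ : ℝ)
  (hA : ∀ u : E, xs u - f u ≤ xs x - f x) (hc₁ : ∀ u : E, xs u - g u ≤ c₁)
  (hB : ∀ u : E, zs u - g u ≤ zs x - g x) (hc₂ : ∀ u : E, zs u - f u ≤ c₂)

include hA hc₁ hB hc₂ in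
lemma funLog_bounds :
    (f x + g x)/2 - ((g x + c₁ - xs x) + (f x + c₂ - zs x))/12 ≤ funLog f g x ∧
      funLog f g x ≤ (f x + g x)/2 := by
  have hS0 : 0 ≤ (g x + c₁ - xs x) + (f x + c₂ - zs x) := by
    have h1 := hc₁ x; have h2 := hc₂ x; linarith
  have hbd := fun l (hl : l ∈ Ioo (0:ℝ) 1) =>
    funGeom_bounds f g x xs zs c₁ c₂ hA hc₁ hB hc₂ hl
  have hGm : AEStronglyMeasurable (fun l => funGeom f g l x)
      (volume.restrict (Ioc (0:ℝ) 1)) := by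
    have h2 : AEStronglyMeasurable (fun l => funGeom f g l x)
        (volume.restrict (Ioo (0:ℝ) 1)) :=
      (funGeom_contOn f g x xs zs c₁ c₂ hA hc₁ hB hc₂).aestronglyMeasurable measurableSet_Ioo
    rwa [Measure.restrict_congr_set Ioo_ae_eq_Ioc] at h2
  have habs : ∀ l ∈ Ioo (0:ℝ) 1,
      |funGeom f g l x| ≤ |f x| + |g x| + ((g x + c₁ - xs x) + (f x + c₂ - zs x)) := by
    intro l hl
    obtain ⟨hlow, hup⟩ := hbd l hl
    have h1 : (1-l) * f x ≤ |f x| := by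
      nlinarith [mul_nonneg (by linarith [hl.2] : (0:ℝ) ≤ 1-l)
        (by linarith [le_abs_self (f x)] : 0 ≤ |f x| - f x),
        mul_nonneg (le_of_lt hl.1) (abs_nonneg (f x))]
    have h2 : l * g x ≤ |g x| := by
      nlinarith [mul_nonneg (le_of_lt hl.1)
        (by linarith [le_abs_self (g x)] : 0 ≤ |g x| - g x),
        mul_nonneg (by linarith [hl.2] : (0:ℝ) ≤ 1-l) (abs_nonneg (g x))]
    have h3 : -|f x| ≤ (1-l) * f x := by
      nlinarith [mul_nonneg (by linarith [hl.2] : (0:ℝ) ≤ 1-l)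
        (by linarith [neg_abs_le (f x)] : 0 ≤ f x + |f x|),
        mul_nonneg (le_of_lt hl.1) (abs_nonneg (f x))]
    have h4 : -|g x| ≤ l * g x := by
      nlinarith [mul_nonneg (le_of_lt hl.1)
        (by linarith [neg_abs_le (g x)] : 0 ≤ g x + |g x|),
        mul_nonneg (by linarith [hl.2] : (0:ℝ) ≤ 1-l) (abs_nonneg (g x))]
    have h5 : ((g x + c₁ - xs x) + (f x + c₂ - zs x)) * (l * (1-l) / 2)
        ≤ (g x + c₁ - xs x) + (f x + c₂ - zs x) :=
      mul_le_of_le_one_right hS0 (by nlinarith [hl.1, hl.2])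
    rw [abs_le]; constructor <;> linarith
  have hG_int : IntervalIntegrable (fun l => funGeom f g l x) volume 0 1 := by
    rw [intervalIntegrable_iff_integrableOn_Ioc_of_le (by norm_num)]
    refine MeasureTheory.Integrable.mono
      (integrable_const (|f x| + |g x| + ((g x + c₁ - xs x) + (f x + c₂ - zs x)))) hGm ?_
    filter_upwards [ae_restrict_mem measurableSet_Ioc,
      (ae_ne_real 1).filter_mono (ae_mono Measure.restrict_le_self)] with l hmem hne
    have hl : l ∈ Ioo (0:ℝ) 1 := ⟨hmem.1, lt_of_le_of_ne hmem.2 hne⟩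
    rw [Real.norm_eq_abs, Real.norm_eq_abs, abs_of_nonneg (show (0:ℝ) ≤ |f x| + |g x|
      + ((g x + c₁ - xs x) + (f x + c₂ - zs x)) by
      have := abs_nonneg (f x); have := abs_nonneg (g x); linarith)]
    exact habs l hl
  have hupper_int : IntervalIntegrable (fun l : ℝ => (1-l) * f x + l * g x) volume 0 1 :=
    (by fun_prop : Continuous fun l : ℝ => (1-l) * f x + l * g x).intervalIntegrable 0 1
  have hlower_int : IntervalIntegrable (fun l : ℝ => (1-l) * f x + l * g x
      - ((g x + c₁ - xs x) + (f x + c₂ - zs x)) * (l * (1-l) / 2)) volume 0 1 :=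
    (by fun_prop : Continuous fun l : ℝ => (1-l) * f x + l * g x
      - ((g x + c₁ - xs x) + (f x + c₂ - zs x)) * (l * (1-l) / 2)).intervalIntegrable 0 1
  have hupval : ∫ l in (0:ℝ)..1, ((1-l) * f x + l * g x) = (f x + g x)/2 := by
    have e : (fun l : ℝ => (1-l) * f x + l * g x)
        = fun l : ℝ => f x + (g x - f x) * l := by funext l; ring
    rw [e, intervalIntegral.integral_add intervalIntegrable_const
      (intervalIntegral.intervalIntegrable_id.const_mul _),
      intervalIntegral.integral_const_mul, intervalIntegral.integral_const, integral_id]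
    norm_num; ring
  have hlowval : ∫ l in (0:ℝ)..1, ((1-l) * f x + l * g x
        - ((g x + c₁ - xs x) + (f x + c₂ - zs x)) * (l * (1-l) / 2))
      = (f x + g x)/2 - ((g x + c₁ - xs x) + (f x + c₂ - zs x))/12 := by
    have e : (fun l : ℝ => (1-l) * f x + l * g x
          - ((g x + c₁ - xs x) + (f x + c₂ - zs x)) * (l * (1-l) / 2))
        = fun l : ℝ => (f x + (g x - f x
            - ((g x + c₁ - xs x) + (f x + c₂ - zs x))/2) * l)
          + ((g x + c₁ - xs x) + (f x + c₂ - zs x))/2 * l^2 := by funext l; ring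
    rw [e, intervalIntegral.integral_add (by
        exact (by fun_prop : Continuous fun l : ℝ => f x + (g x - f x
          - ((g x + c₁ - xs x) + (f x + c₂ - zs x))/2) * l).intervalIntegrable 0 1)
      (by exact (by fun_prop : Continuous fun l : ℝ => ((g x + c₁ - xs x)
          + (f x + c₂ - zs x))/2 * l^2).intervalIntegrable 0 1),
      intervalIntegral.integral_add intervalIntegrable_const
        (intervalIntegral.intervalIntegrable_id.const_mul _),
      intervalIntegral.integral_const_mul, intervalIntegral.integral_const_mul,
      intervalIntegral.integral_const, integral_id, integral_pow]
    norm_num; ring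
  constructor
  · rw [funLog, ← hlowval]
    refine intervalIntegral.integral_mono_ae_restrict (by norm_num) hlower_int hG_int ?_
    filter_upwards [ae_restrict_mem measurableSet_Icc,
      (ae_ne_real 0).filter_mono (ae_mono Measure.restrict_le_self),
      (ae_ne_real 1).filter_mono (ae_mono Measure.restrict_le_self)] with l hmem h0 h1
    exact (hbd l ⟨lt_of_le_of_ne hmem.1 (Ne.symm h0), lt_of_le_of_ne hmem.2 h1⟩).1
  · rw [funLog, ← hupval]
    refine intervalIntegral.integral_mono_ae_restrict (by norm_num) hG_int hupper_int ?_
    filter_upwards [ae_restrict_mem measurableSet_Icc,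
      (ae_ne_real 0).filter_mono (ae_mono Measure.restrict_le_self),
      (ae_ne_real 1).filter_mono (ae_mono Measure.restrict_le_self)] with l hmem h0 h1
    exact (hbd l ⟨lt_of_le_of_ne hmem.1 (Ne.symm h0), lt_of_le_of_ne hmem.2 h1⟩).2

end Main4

/-- A reverse inequality for `L(f,g) ≤ f ∇ g` in terms of subgradients:
if `x* ∈ ∂f(x)`, `z* ∈ ∂g(x)`, and `c₁, c₂` bound `x* − g` and `z* − f` respectively, then
`0 ≤ (f∇g)(x) − L(f,g)(x) ≤ (1/12)((g(x) + c₁ − x*(x)) + (f(x) + c₂ − z*(x)))`. -/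
theorem funLog_reverse_subgradient
    {E : Type*} [NormedAddCommGroup E] [NormedSpace ℝ E]
    (f g : E → ℝ)
    (hf : ConvexOn ℝ Set.univ f) (hfc : Continuous f)
    (hg : ConvexOn ℝ Set.univ g) (hgc : Continuous g)
    (hmin : ∃ φ₀ : E →L[ℝ] ℝ, ∃ c : ℝ, ∀ u : E, φ₀ u - c ≤ f u ∧ φ₀ u - c ≤ g u)
    (x : E) (xs zs : E →L[ℝ] ℝ)
    (hxs : ∀ u : E, f x + xs (u - x) ≤ f u)
    (hzs : ∀ u : E, g x + zs (u - x) ≤ g u) :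
    ∀ c₁ c₂ : ℝ, (∀ u : E, xs u - g u ≤ c₁) → (∀ u : E, zs u - f u ≤ c₂) →
      0 ≤ (f x + g x) / 2 - funLog f g x ∧
      (f x + g x) / 2 - funLog f g x ≤
        (1 / 12) * ((g x + c₁ - xs x) + (f x + c₂ - zs x)) := by
  intro c₁ c₂ hc₁ hc₂
  have hA : ∀ u : E, xs u - f u ≤ xs x - f x := fun u => by
    have h := hxs u; rw [map_sub] at h; linarith
  have hB : ∀ u : E, zs u - g u ≤ zs x - g x := fun u => by
    have h := hzs u; rw [map_sub] at h; linarith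
  obtain ⟨h1, h2⟩ := funLog_bounds f g x xs zs c₁ c₂ hA hc₁ hB hc₂
  constructor <;> linarith
end
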